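/- arXiv:2306.10260 — 2 statements merged into one kernel-verified Lean document; each statement's English description precedes it below -/
import Mathlib

section
/- (Randomized-response likelihood ratio amplification.) Let r ∈ (0,1), ε ≥ 0, and let p, p′ ∈ [0,1] satisfy p′ ≤ e^{ε}·p and (1 − p) ≤ e^{ε}·(1 − p′). Then ((1−r)/2 + r·p′) / ((1−r)/2 + r·p) ≤ (e^{ε}(1+r) + 1 − r) / (e^{ε}(1−r) + 1 + r). -/
open Real

/-- Randomized-response likelihood ratio amplification: if the binary query output
probabilities `p, p′` satisfy the `ε`-DP likelihood conditions, then after passing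
through the randomized response channel with truthful response rate `r`, the likelihood
ratio is bounded by `(e^ε(1+r) + 1 − r)/(e^ε(1−r) + 1 + r)`. -/
theorem randomized_response_amplification (r ε p p' : ℝ)
    (hr : r ∈ Set.Ioo (0 : ℝ) 1) (hε : 0 ≤ ε)
    (hp : p ∈ Set.Icc (0 : ℝ) 1) (hp' : p' ∈ Set.Icc (0 : ℝ) 1)
    (h1 : p' ≤ Real.exp ε * p) (h2 : 1 - p ≤ Real.exp ε * (1 - p')) :
    ((1 - r) / 2 + r * p') / ((1 - r) / 2 + r * p) ≤
      (Real.exp ε * (1 + r) + 1 - r) / (Real.exp ε * (1 - r) + 1 + r) := by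
  obtain ⟨hr0, hr1⟩ := hr
  have hE : (0:ℝ) < Real.exp ε := Real.exp_pos ε
  have hE1 : (1:ℝ) ≤ Real.exp ε := Real.one_le_exp hε
  have hd1 : (0:ℝ) < (1 - r) / 2 + r * p := by nlinarith [hp.1]
  have hd2 : (0:ℝ) < Real.exp ε * (1 - r) + 1 + r := by nlinarith
  rw [div_le_div_iff₀ hd1 hd2]
  nlinarith [mul_nonneg (mul_nonneg hr0.le (by linarith : (0:ℝ) ≤ 1 + r)) (sub_nonneg.2 h1),
    mul_nonneg (mul_nonneg hr0.le (by linarith : (0:ℝ) ≤ 1 - r)) (sub_nonneg.2 h2)]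
end

section
/- (GDP-type constraint forces a variance lower bound.) Let Φ denote the cumulative distribution function of the standard normal law. Let (μ_n) and (ν_n) be sequences of Borel probability measures on ℝ, let σ_n > 0 and ε_n ≥ 0, and suppose: (i) the pushforward of μ_n under x ↦ x/σ_n converges weakly to N(0,1); (ii) the pushforward of ν_n under x ↦ (x − ε_n)/σ_n converges weakly to N(0,1); and (iii) for every δ > 0 there exists n_0 such that for all n ≥ n_0 and every Borel set E ⊆ ℝ, μ_n(E) − ν_n(E) ≤ 2Φ(1/2) − 1 + δ. Then lim sup_{n→∞} ε_n/σ_n ≤ 1; equivalently, for every k > 1, ε_n/σ_n ≤ k for all sufficiently large n. -/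
open MeasureTheory ProbabilityTheory Filter Real

noncomputable def stdNormalCDF (x : ℝ) : ℝ :=
  ((ProbabilityTheory.gaussianReal 0 1) (Set.Iic x)).toReal

lemma gauss_singleton (a : ℝ) : gaussianReal 0 1 {a} = 0 :=
  gaussianReal_absolutelyContinuous 0 one_ne_zero (Real.volume_singleton)

lemma gauss_Iio (a : ℝ) : gaussianReal 0 1 (Set.Iio a) = gaussianReal 0 1 (Set.Iic a) :=
  measure_congr (Iio_ae_eq_Iic' (gauss_singleton a))

lemma gauss_map_neg : (gaussianReal 0 1).map (fun x => -x) = gaussianReal 0 1 := by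
  have h := gaussianReal_map_const_mul (μ := 0) (v := 1) (-1)
  simp only [neg_one_mul, neg_zero] at h
  convert h using 3
  ext
  norm_num

lemma gauss_Iic_neg (a : ℝ) :
    gaussianReal 0 1 (Set.Iic (-a)) = 1 - gaussianReal 0 1 (Set.Iic a) := by
  have h1 : gaussianReal 0 1 (Set.Iic (-a)) = gaussianReal 0 1 (Set.Ici a) := by
    conv_lhs => rw [← gauss_map_neg]
    rw [Measure.map_apply measurable_neg measurableSet_Iic]
    congr 1
    ext x
    simp
  rw [h1, ← Set.compl_Iio, prob_compl_eq_one_sub measurableSet_Iio, gauss_Iio]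

lemma gauss_lt {a b : ℝ} (hab : a < b) :
    gaussianReal 0 1 (Set.Iic a) < gaussianReal 0 1 (Set.Iic b) := by
  have hsub : gaussianReal 0 1 (Set.Ioc a b) ≠ 0 := by
    intro h
    have h2 := gaussianReal_absolutelyContinuous' 0 one_ne_zero h
    rw [Real.volume_Ioc] at h2
    simp only [ENNReal.ofReal_eq_zero, sub_nonpos] at h2
    exact absurd h2 (not_le.mpr hab)
  have hu : Set.Iic a ∪ Set.Ioc a b = Set.Iic b := Set.Iic_union_Ioc_eq_Iic hab.le
  have hd : Disjoint (Set.Iic a) (Set.Ioc a b) := Set.Iic_disjoint_Ioc le_rfl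
  rw [← hu, measure_union hd measurableSet_Ioc]
  exact ENNReal.lt_add_right (measure_ne_top _ _) hsub

lemma stdNormalCDF_lt {a b : ℝ} (hab : a < b) : stdNormalCDF a < stdNormalCDF b :=
  ENNReal.toReal_strict_mono (measure_ne_top _ _) (gauss_lt hab)

lemma stdNormalCDF_neg (a : ℝ) : stdNormalCDF (-a) = 1 - stdNormalCDF a := by
  unfold stdNormalCDF
  rw [gauss_Iic_neg, ENNReal.toReal_sub_of_le prob_le_one ENNReal.one_ne_top, ENNReal.toReal_one]

/-- A GDP-type constraint forces a variance lower bound: if `μ_n` rescaled by `1/σ_n`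
and `ν_n` recentered by `ε_n` and rescaled by `1/σ_n` both converge weakly to `N(0,1)`,
and eventually `μ_n(E) − ν_n(E) ≤ 2Φ(1/2) − 1 + δ` for every Borel `E` and every
`δ > 0`, then for every `k > 1`, `ε_n/σ_n ≤ k` for all sufficiently large `n`
(i.e. `lim sup ε_n/σ_n ≤ 1`). -/
theorem gdp_constraint_variance_lower_bound
    (μ ν : ℕ → Measure ℝ) (hμ : ∀ n, IsProbabilityMeasure (μ n))
    (hν : ∀ n, IsProbabilityMeasure (ν n))
    (σ ε : ℕ → ℝ) (hσ : ∀ n, 0 < σ n) (hε : ∀ n, 0 ≤ ε n)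
    (h1 : ∀ f : BoundedContinuousFunction ℝ ℝ,
      Tendsto (fun n => ∫ x, f x ∂((μ n).map (fun x => x / σ n))) atTop
        (nhds (∫ x, f x ∂(ProbabilityTheory.gaussianReal 0 1))))
    (h2 : ∀ f : BoundedContinuousFunction ℝ ℝ,
      Tendsto (fun n => ∫ x, f x ∂((ν n).map (fun x => (x - ε n) / σ n))) atTop
        (nhds (∫ x, f x ∂(ProbabilityTheory.gaussianReal 0 1))))
    (h3 : ∀ δ > (0 : ℝ), ∃ n₀ : ℕ, ∀ n ≥ n₀, ∀ E : Set ℝ, MeasurableSet E →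
      ((μ n) E).toReal - ((ν n) E).toReal ≤ 2 * stdNormalCDF (1 / 2) - 1 + δ) :
    ∀ k > (1 : ℝ), ∀ᶠ n in atTop, ε n / σ n ≤ k := by
  intro k hk
  have hmapμ : ∀ n, IsProbabilityMeasure ((μ n).map (fun x => x / σ n)) := fun n =>
    Measure.isProbabilityMeasure_map (measurable_id.div_const _).aemeasurable
  have hmapν : ∀ n, IsProbabilityMeasure ((ν n).map (fun x => (x - ε n) / σ n)) := fun n =>
    Measure.isProbabilityMeasure_map ((measurable_id.sub_const _).div_const _).aemeasurable
  set G : ProbabilityMeasure ℝ := ⟨gaussianReal 0 1, inferInstance⟩ with hGdef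
  set P : ℕ → ProbabilityMeasure ℝ :=
    fun n => ⟨(μ n).map (fun x => x / σ n), hmapμ n⟩ with hPdef
  set Q : ℕ → ProbabilityMeasure ℝ :=
    fun n => ⟨(ν n).map (fun x => (x - ε n) / σ n), hmapν n⟩ with hQdef
  have hP : Tendsto P atTop (nhds G) :=
    ProbabilityMeasure.tendsto_iff_forall_integral_tendsto.mpr h1
  have hQ : Tendsto Q atTop (nhds G) :=
    ProbabilityMeasure.tendsto_iff_forall_integral_tendsto.mpr h2
  -- constants
  set A : ℝ := stdNormalCDF (k / 2) with hAdef
  set B : ℝ := stdNormalCDF (1 / 2) with hBdef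
  have hBA : B < A := stdNormalCDF_lt (by linarith)
  set η : ℝ := (A - B) / 3 with hηdef
  have hηpos : 0 < η := by rw [hηdef]; linarith
  -- portmanteau consequences
  have keyP : Tendsto (fun n => (((μ n).map (fun x => x / σ n)) (Set.Iic (k / 2))).toReal)
      atTop (nhds A) := by
    have t := ProbabilityMeasure.tendsto_measure_of_null_frontier_of_tendsto' hP
      (E := Set.Iic (k / 2)) (by rw [frontier_Iic]; exact gauss_singleton _)
    exact (ENNReal.tendsto_toReal (measure_ne_top _ _)).comp t
  have keyQ : Tendsto (fun n => (((ν n).map (fun x => (x - ε n) / σ n))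
      (Set.Iic (-(k / 2)))).toReal) atTop (nhds (1 - A)) := by
    have t := ProbabilityMeasure.tendsto_measure_of_null_frontier_of_tendsto' hQ
      (E := Set.Iic (-(k / 2))) (by rw [frontier_Iic]; exact gauss_singleton _)
    have t2 := (ENNReal.tendsto_toReal (measure_ne_top _ _)).comp t
    rwa [show ((G : Measure ℝ) (Set.Iic (-(k / 2)))).toReal = 1 - A from
      stdNormalCDF_neg (k / 2)] at t2
  obtain ⟨n₀, hn₀⟩ := h3 (A - B) (by linarith)
  have evP := keyP.eventually (eventually_ge_nhds (show A - η < A by linarith))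
  have evQ := keyQ.eventually (eventually_le_nhds (show 1 - A < 1 - A + η by linarith))
  filter_upwards [evP, evQ, eventually_ge_atTop n₀] with n hPn hQn hn
  by_contra hcon
  push_neg at hcon
  have hσn := hσ n
  have hkε : k * σ n < ε n := (lt_div_iff₀ hσn).mp hcon
  set E : Set ℝ := Set.Iic (σ n * (k / 2)) with hEdef
  -- μ n E
  have hμE : ((μ n) E).toReal = (((μ n).map (fun x => x / σ n)) (Set.Iic (k / 2))).toReal := by
    rw [Measure.map_apply (show Measurable fun x : ℝ => x / σ n by fun_prop) measurableSet_Iic]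
    congr 2
    ext x
    simp only [Set.mem_preimage, Set.mem_Iic, hEdef]
    rw [div_le_iff₀ hσn]
    constructor <;> intro h <;> linarith
  -- ν n E
  have hνE : ((ν n) E).toReal
      ≤ (((ν n).map (fun x => (x - ε n) / σ n)) (Set.Iic (-(k / 2)))).toReal := by
    rw [Measure.map_apply (show Measurable fun x : ℝ => (x - ε n) / σ n by fun_prop) measurableSet_Iic]
    refine ENNReal.toReal_mono (measure_ne_top _ _) (measure_mono ?_)
    intro x hx
    simp only [Set.mem_Iic, hEdef] at hx
    simp only [Set.mem_preimage, Set.mem_Iic]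
    rw [div_le_iff₀ hσn]
    linarith
  have hfinal := hn₀ n hn E measurableSet_Iic
  rw [hμE] at hfinal
  have : A - η - (1 - A + η) ≤ 2 * B - 1 + (A - B) := by
    calc A - η - (1 - A + η)
        ≤ (((μ n).map (fun x => x / σ n)) (Set.Iic (k / 2))).toReal - ((ν n) E).toReal := by
          have := le_trans hνE hQn
          linarith
      _ ≤ 2 * B - 1 + (A - B) := hfinal
  rw [hηdef] at this
  linarith
end
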